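/- Let G = (V, E_o ∪ E_e) be a finite directed graph with E_e ≠ ∅ and no e-cycle under →ᵈ = E_o ∪ E_o⁻¹ ∪ E_e. Then there is no infinite sequence c₀, d₀, c₁, d₁, c₂, … such that for all i: dᵢ ∈ R(cᵢ) (reachable from cᵢ under E_o ∪ E_o⁻¹) and (c_{i+1}, dᵢ) ∈ E_e with c_{i+1} ∉ R(cᵢ); in particular, if every vertex with an outgoing e-edge had an incoming e-edge into its reachable set, one could construct such an infinite sequence over the finite set V, forcing a repetition and hence an e-cycle—a contradiction. -/

import Mathlib

section Aux

variable {V : Type} (Eo Ee : V → V → Prop)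

/-- Indexed path under `Step = Eo ∪ Eo⁻¹ ∪ Ee`. -/
def QPath (x y : V) : Prop :=
  ∃ (n : ℕ) (f : ℕ → V), f 0 = x ∧ f n = y ∧
    ∀ i < n, Eo (f i) (f (i+1)) ∨ Eo (f (i+1)) (f i) ∨ Ee (f i) (f (i+1))

/-- Indexed path containing at least one `Ee` step. -/
def PPath (x y : V) : Prop :=
  ∃ (n : ℕ) (f : ℕ → V), f 0 = x ∧ f n = y ∧
    (∀ i < n, Eo (f i) (f (i+1)) ∨ Eo (f (i+1)) (f i) ∨ Ee (f i) (f (i+1))) ∧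
    ∃ i < n, Ee (f i) (f (i+1))

variable {Eo Ee}

lemma glue {x y z : V} (n m : ℕ) (f g : ℕ → V)
    (hf0 : f 0 = x) (hfn : f n = y) (hg0 : g 0 = y) (hgm : g m = z)
    (hf : ∀ i < n, Eo (f i) (f (i+1)) ∨ Eo (f (i+1)) (f i) ∨ Ee (f i) (f (i+1)))
    (hg : ∀ i < m, Eo (g i) (g (i+1)) ∨ Eo (g (i+1)) (g i) ∨ Ee (g i) (g (i+1)))
    (hEe : (∃ i < n, Ee (f i) (f (i+1))) ∨ (∃ i < m, Ee (g i) (g (i+1)))) :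
    PPath Eo Ee x z := by
  have key : ∀ j ≤ n, (if j < n then f j else g (j - n)) = f j := by
    intro j hj
    rcases lt_or_eq_of_le hj with h | h
    · rw [if_pos h]
    · subst h; simp [hg0, hfn]
  refine ⟨n + m, fun i => if i < n then f i else g (i - n), ?_, ?_, ?_, ?_⟩
  · dsimp only
    rw [key 0 (Nat.zero_le n), hf0]
  · dsimp only
    rw [if_neg (by omega : ¬ n + m < n)]
    have e : n + m - n = m := by omega
    rw [e, hgm]
  · intro i hi
    dsimp only
    by_cases h : i < n
    · rw [key i (by omega), key (i+1) (by omega)]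
      exact hf i h
    · rw [if_neg h, if_neg (by omega : ¬ i + 1 < n)]
      have e : i + 1 - n = (i - n) + 1 := by omega
      rw [e]
      exact hg (i - n) (by omega)
  · rcases hEe with ⟨i, hi, he⟩ | ⟨i, hi, he⟩
    · refine ⟨i, by omega, ?_⟩
      dsimp only
      rw [key i (by omega), key (i+1) (by omega)]
      exact he
    · refine ⟨n + i, by omega, ?_⟩
      dsimp only
      rw [if_neg (by omega : ¬ n + i < n), if_neg (by omega : ¬ n + i + 1 < n)]
      have e1 : n + i - n = i := by omega
      have e2 : n + i + 1 - n = i + 1 := by omega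
      rw [e1, e2]
      exact he

lemma rtg_to_Q {x y : V}
    (h : Relation.ReflTransGen (fun a b => Eo a b ∨ Eo b a) x y) :
    QPath Eo Ee x y := by
  induction h with
  | refl => exact ⟨0, fun _ => x, rfl, rfl, by omega⟩
  | @tail b cc hxy hstep ih =>
    obtain ⟨n, f, hf0, hfn, hf⟩ := ih
    refine ⟨n + 1, fun i => if i < n + 1 then f i else cc, ?_, ?_, ?_⟩
    · dsimp only
      rw [if_pos (by omega : (0:ℕ) < n + 1), hf0]
    · dsimp only
      rw [if_neg (by omega : ¬ n + 1 < n + 1)]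
    · intro i hi
      dsimp only
      by_cases h : i < n
      · rw [if_pos (by omega : i < n + 1), if_pos (by omega : i + 1 < n + 1)]
        exact hf i h
      · have hin : i = n := by omega
        subst hin
        rw [if_pos (by omega : i < i + 1), if_neg (by omega : ¬ i + 1 < i + 1), hfn]
        rcases hstep with h' | h'
        · exact Or.inl h'
        · exact Or.inr (Or.inl h')

lemma P_trans {x y z : V} (h1 : PPath Eo Ee x y) (h2 : PPath Eo Ee y z) :
    PPath Eo Ee x z := by
  obtain ⟨n, f, hf0, hfn, hf, hfe⟩ := h1
  obtain ⟨m, g, hg0, hgm, hg, _⟩ := h2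
  exact glue n m f g hf0 hfn hg0 hgm hf hg (Or.inl hfe)

lemma PQ_trans {x y z : V} (h1 : PPath Eo Ee x y) (h2 : QPath Eo Ee y z) :
    PPath Eo Ee x z := by
  obtain ⟨n, f, hf0, hfn, hf, hfe⟩ := h1
  obtain ⟨m, g, hg0, hgm, hg⟩ := h2
  exact glue n m f g hf0 hfn hg0 hgm hf hg (Or.inl hfe)

end Aux

/-- Pigeonhole step: in a finite graph with e-edges `Ee ≠ ∅` and no e-cycle
under `→ᵈ = Eo ∪ Eo⁻¹ ∪ Ee`, there is no infinite sequence `c₀, d₀, c₁, d₁, …`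
with `dᵢ ∈ R(cᵢ)` (reachable under `Eo ∪ Eo⁻¹`), `(c_{i+1}, dᵢ) ∈ Ee`, and
`c_{i+1} ∉ R(cᵢ)`. -/
theorem no_infinite_eedge_chain {V : Type} [Fintype V] (Eo Ee : V → V → Prop)
    (hne : ∃ x y, Ee x y)
    (hnocycle : ¬ ∃ (n : ℕ) (c : ℕ → V),
      (∀ i ≤ n, Eo (c i) (c (i+1)) ∨ Eo (c (i+1)) (c i) ∨ Ee (c i) (c (i+1))) ∧
      c 0 = c (n+1) ∧ ∃ i ≤ n, Ee (c i) (c (i+1))) :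
    ¬ ∃ (c d : ℕ → V), ∀ i : ℕ,
      Relation.ReflTransGen (fun x y => Eo x y ∨ Eo y x) (c i) (d i) ∧
      Ee (c (i+1)) (d i) ∧
      ¬ Relation.ReflTransGen (fun x y => Eo x y ∨ Eo y x) (c i) (c (i+1)) := by
  rintro ⟨c, d, h⟩
  -- From each step, a `PPath` from `c (i+1)` back to `c i`.
  have hstep : ∀ i, PPath Eo Ee (c (i+1)) (c i) := by
    intro i
    obtain ⟨hrd, hEe, -⟩ := h i
    -- single Ee step from c (i+1) to d i
    have p1 : PPath Eo Ee (c (i+1)) (d i) := by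
      refine ⟨1, fun j => if j = 0 then c (i+1) else d i, by simp, by simp, ?_, ?_⟩
      · intro j hj
        have : j = 0 := by omega
        subst this
        simp only [if_pos rfl]
        exact Or.inr (Or.inr (by simp [hEe]))
      · exact ⟨0, by omega, by simp [hEe]⟩
    -- path from d i back to c i (symmetric relation)
    have hsym : Relation.ReflTransGen (fun x y => Eo x y ∨ Eo y x) (d i) (c i) := by
      have : Symmetric (fun x y : V => Eo x y ∨ Eo y x) := fun a b hab => hab.symm
      exact (@Relation.ReflTransGen.symmetric _ _ ⟨this⟩).symm _ _ hrd
    exact PQ_trans p1 (rtg_to_Q hsym)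
  -- Chains of `PPath`s: from `c (k+1+t)` back to `c k`.
  have hchain : ∀ k t, PPath Eo Ee (c (k + 1 + t)) (c k) := by
    intro k t
    induction t with
    | zero => exact hstep k
    | succ t ih =>
      have h1 : PPath Eo Ee (c (k + 1 + t + 1)) (c (k + 1 + t)) := hstep (k + 1 + t)
      have : k + 1 + (t + 1) = k + 1 + t + 1 := by omega
      rw [this]
      exact P_trans h1 ih
  -- Pigeonhole: two equal values of `c`.
  obtain ⟨i, j, hij, hcij⟩ := Finite.exists_ne_map_eq_of_infinite c
  -- wlog i < j
  have main : ∀ k m : ℕ, k < m → c k = c m → False := by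
    intro k m hkm hceq
    have hp : PPath Eo Ee (c m) (c k) := by
      have : m = k + 1 + (m - k - 1) := by omega
      rw [this]
      exact hchain k (m - k - 1)
    obtain ⟨n, f, hf0, hfn, hf, i₀, hi₀, he₀⟩ := hp
    have hn1 : 1 ≤ n := by omega
    apply hnocycle
    refine ⟨n - 1, f, ?_, ?_, ?_⟩
    · intro a ha
      exact hf a (by omega)
    · have : n - 1 + 1 = n := by omega
      rw [this, hf0, hfn, hceq]
    · exact ⟨i₀, by omega, he₀⟩
  rcases lt_or_gt_of_ne hij with h' | h'
  · exact main i j h' hcij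
  · exact main j i h' hcij.symm
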